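/- Fix a sample size m ∈ ℕ, an accuracy ε with 0 < ε < 1/2, a failure probability δ ∈ (0,1), and a bias q ∈ (0,1] with sqrt(q) > 2*ε. Let A : (Fin m → Bool) → ℝ be any estimator. Suppose A estimates the Nash social welfare to accuracy ε with confidence 1 − δ on both the instance with q' = 0 and the instance with q' = q; that is: (a) with probability at least 1 − δ over x drawn from the m-fold product of Bernoulli(0), |A(x)| ≤ ε, and (b) with probability at least 1 − δ over x drawn from the m-fold product of Bernoulli(q), |A(x) − sqrt(q)| ≤ ε. Then (1 − q)^m ≤ δ; equivalently, m * log(1/(1−q)) ≥ log(1/δ) whenever q < 1. -/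

import Mathlib

open scoped BigOperators
open MeasureTheory

/-- The Bernoulli measure on `Bool` with success probability `q`. -/
noncomputable def bernoulliMeasure (q : ℝ) : Measure Bool :=
  ENNReal.ofReal q • Measure.dirac true + ENNReal.ofReal (1 - q) • Measure.dirac false

lemma bernoulliMeasure_false (q : ℝ) :
    bernoulliMeasure q {false} = ENNReal.ofReal (1 - q) := by
  simp [bernoulliMeasure, Measure.dirac_apply' _ (measurableSet_singleton false)]

lemma bernoulliMeasure_prob (q : ℝ) (h0 : 0 ≤ q) (h1 : q ≤ 1) :
    IsProbabilityMeasure (bernoulliMeasure q) := by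
  constructor
  simp [bernoulliMeasure]
  rw [← ENNReal.ofReal_add h0 (by linarith), ← ENNReal.ofReal_one]
  congr 1; ring

instance bernoulliMeasure_finite (q : ℝ) : IsFiniteMeasure (bernoulliMeasure q) := by
  constructor
  simp [bernoulliMeasure]

lemma pi_singleton_false (m : ℕ) (q : ℝ) :
    (Measure.pi (fun _ : Fin m => bernoulliMeasure q)) {fun _ => false}
      = ENNReal.ofReal (1 - q) ^ m := by
  rw [← Set.univ_pi_singleton (fun _ : Fin m => false), Measure.pi_pi]
  simp [bernoulliMeasure_false]

/-- Sample-complexity lower bound for estimating the Nash social welfare `√q` of a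
two-group instance where group 1 has constant utility `1` and group 2 has
`Bernoulli(q)` utility: any estimator that is `ε`-accurate with confidence `1 − δ`
on both the `q' = 0` and `q' = q` instances (with `√q > 2ε`) forces `(1−q)^m ≤ δ`,
i.e. `m log(1/(1−q)) ≥ log(1/δ)` whenever `q < 1`. -/
theorem nsw_estimation_lower_bound (m : ℕ) (ε δ q : ℝ)
    (hε : 0 < ε) (hε' : ε < 1 / 2) (hδ : δ ∈ Set.Ioo (0:ℝ) 1)
    (hq0 : 0 < q) (hq1 : q ≤ 1) (hq : 2 * ε < Real.sqrt q)
    (A : (Fin m → Bool) → ℝ)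
    (ha : ENNReal.ofReal (1 - δ) ≤
      (Measure.pi (fun _ : Fin m => bernoulliMeasure 0)) {x | |A x| ≤ ε})
    (hb : ENNReal.ofReal (1 - δ) ≤
      (Measure.pi (fun _ : Fin m => bernoulliMeasure q)) {x | |A x - Real.sqrt q| ≤ ε}) :
    (1 - q) ^ m ≤ δ ∧
      (q < 1 → Real.log (1 / δ) ≤ (m : ℝ) * Real.log (1 / (1 - q))) := by
  obtain ⟨hδ0, hδ1⟩ := hδ
  set f0 : Fin m → Bool := fun _ => false with hf0
  haveI h0prob : ∀ i : Fin m, IsProbabilityMeasure (bernoulliMeasure (0:ℝ)) :=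
    fun _ => bernoulliMeasure_prob 0 le_rfl zero_le_one
  haveI hqprob : ∀ i : Fin m, IsProbabilityMeasure (bernoulliMeasure q) :=
    fun _ => bernoulliMeasure_prob q hq0.le hq1
  haveI : IsProbabilityMeasure (Measure.pi (fun _ : Fin m => bernoulliMeasure (0:ℝ))) :=
    inferInstance
  haveI : IsProbabilityMeasure (Measure.pi (fun _ : Fin m => bernoulliMeasure q)) :=
    inferInstance
  -- Step 1: f0 satisfies |A f0| ≤ ε
  have hAf0 : |A f0| ≤ ε := by
    by_contra h
    have hsub : {x : Fin m → Bool | |A x| ≤ ε} ⊆ {f0}ᶜ := by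
      intro x hx hx'
      rw [Set.mem_singleton_iff] at hx'
      subst hx'
      exact h hx
    have h1 : (Measure.pi (fun _ : Fin m => bernoulliMeasure 0)) {f0}ᶜ = 0 := by
      rw [measure_compl (measurableSet_singleton f0) (measure_ne_top _ _)]
      rw [measure_univ, pi_singleton_false]
      simp
    have := le_trans ha (measure_mono hsub)
    rw [h1] at this
    simp only [nonpos_iff_eq_zero, ENNReal.ofReal_eq_zero] at this
    linarith
  -- Step 2: f0 does not satisfy |A f0 - √q| ≤ ε
  have hsq : 0 < Real.sqrt q := Real.sqrt_pos.mpr hq0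
  have hAf0' : ¬ |A f0 - Real.sqrt q| ≤ ε := by
    intro h
    have h1 := abs_sub_abs_le_abs_sub (Real.sqrt q) (A f0)
    rw [abs_sub_comm] at h
    have := abs_le.mp hAf0
    have := abs_le.mp h
    have habs : |Real.sqrt q| = Real.sqrt q := abs_of_pos hsq
    nlinarith [abs_nonneg (A f0)]
  -- Step 3: under Bernoulli(q), the good set avoids f0, so its measure ≤ 1 - (1-q)^m
  have hsub : {x : Fin m → Bool | |A x - Real.sqrt q| ≤ ε} ⊆ {f0}ᶜ := by
    intro x hx hx'
    rw [Set.mem_singleton_iff] at hx'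
    subst hx'
    exact hAf0' hx
  have hcompl : (Measure.pi (fun _ : Fin m => bernoulliMeasure q)) {f0}ᶜ
      = 1 - ENNReal.ofReal (1 - q) ^ m := by
    rw [measure_compl (measurableSet_singleton f0) (measure_ne_top _ _),
      measure_univ, pi_singleton_false]
  have hkey : ENNReal.ofReal (1 - δ) ≤ 1 - ENNReal.ofReal (1 - q) ^ m := by
    rw [← hcompl]
    exact le_trans hb (measure_mono hsub)
  -- translate to reals
  have hpow : ENNReal.ofReal (1 - q) ^ m ≤ ENNReal.ofReal δ := by
    have h1 : ENNReal.ofReal (1 - q) ^ m ≤ 1 := by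
      apply pow_le_one₀ zero_le
      rw [← ENNReal.ofReal_one]
      exact ENNReal.ofReal_le_ofReal (by linarith)
    have := tsub_le_tsub_left hkey (1 : ENNReal)
    calc ENNReal.ofReal (1 - q) ^ m
        = 1 - (1 - ENNReal.ofReal (1 - q) ^ m) := by
          rw [ENNReal.sub_sub_cancel ENNReal.one_ne_top h1]
      _ ≤ 1 - ENNReal.ofReal (1 - δ) := this
      _ = ENNReal.ofReal δ := by
          rw [← ENNReal.ofReal_one, ← ENNReal.ofReal_sub _ (by linarith)]
          norm_num
  have hmain : (1 - q) ^ m ≤ δ := by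
    rw [← ENNReal.ofReal_pow (by linarith)] at hpow
    exact (ENNReal.ofReal_le_ofReal_iff hδ0.le).mp hpow
  refine ⟨hmain, fun hqlt => ?_⟩
  have h1q : 0 < 1 - q := by linarith
  have hlog : Real.log ((1 - q) ^ m) ≤ Real.log δ :=
    Real.log_le_log (pow_pos h1q m) hmain
  rw [Real.log_pow] at hlog
  rw [Real.log_div one_ne_zero hδ0.ne', Real.log_div one_ne_zero h1q.ne', Real.log_one]
  push_cast
  nlinarith
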